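/- Let I be a nonempty index set, {ρ_i}_{i∈I} a collection of star-shaped risk measures, and for each i ∈ I let Γ_i be a set of convex risk measures with ρ_i(X) = min_{γ∈Γ_i} γ(X) for all X ∈ 𝒳 (minima attained). Then for every X ∈ 𝒳, sup_{i∈I} ρ_i(X) = min{γ(X) : γ ∈ ∩_{i∈I} Γ̃_i}, the minimum being attained; moreover ∩_{i∈I} Γ̃_i equals the set of all convex risk measures dominating sup_{i∈I} ρ_i pointwise. -/
import Mathlib

open BoundedContinuousFunction

def IsRiskMeasure {Ω : Type*} [TopologicalSpace Ω] (ρ : (Ω →ᵇ ℝ) → ℝ) : Prop :=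
  (∀ X Y : Ω →ᵇ ℝ, Y ≤ X → ρ Y ≤ ρ X) ∧
  (∀ (X : Ω →ᵇ ℝ) (m : ℝ), ρ (X - const Ω m) = ρ X - m) ∧
  ρ 0 = 0

def IsStarShaped {Ω : Type*} [TopologicalSpace Ω] (ρ : (Ω →ᵇ ℝ) → ℝ) : Prop :=
  ∀ (X : Ω →ᵇ ℝ) (l : ℝ), 1 < l → l * ρ X ≤ ρ (l • X)

def IsConvex {Ω : Type*} [TopologicalSpace Ω] (ρ : (Ω →ᵇ ℝ) → ℝ) : Prop :=
  ∀ (X Y : Ω →ᵇ ℝ) (t : ℝ), t ∈ Set.Icc (0 : ℝ) 1 →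
    ρ (t • X + (1 - t) • Y) ≤ t * ρ X + (1 - t) * ρ Y

/-- The relaxation `Γ̃` of a set `Γ` of convex risk measures. -/
def relaxation {Ω : Type*} [TopologicalSpace Ω] (Γ : Set ((Ω →ᵇ ℝ) → ℝ)) :
    Set ((Ω →ᵇ ℝ) → ℝ) :=
  {g | (IsRiskMeasure g ∧ IsConvex g) ∧ ∀ X : Ω →ᵇ ℝ, ∃ γ ∈ Γ, γ X ≤ g X}

section Aux

variable {Ω : Type*} [TopologicalSpace Ω] [Nonempty Ω]

/-- pointwise supremum of a bounded function -/
noncomputable def bSup (f : Ω →ᵇ ℝ) : ℝ := ⨆ ω, f ω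

lemma bddAbove_range_bcf (f : Ω →ᵇ ℝ) : BddAbove (Set.range fun ω => f ω) :=
  ⟨‖f‖, by rintro y ⟨ω, rfl⟩; exact (abs_le.mp (f.norm_coe_le_norm ω)).2⟩

lemma le_bSup (f : Ω →ᵇ ℝ) (ω : Ω) : f ω ≤ bSup f := le_ciSup (bddAbove_range_bcf f) ω

lemma bSup_le {f : Ω →ᵇ ℝ} {m : ℝ} (h : ∀ ω, f ω ≤ m) : bSup f ≤ m := ciSup_le h

lemma rm_mono_add {γ : (Ω →ᵇ ℝ) → ℝ} (hγ : IsRiskMeasure γ) (X Y : Ω →ᵇ ℝ) (m : ℝ)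
    (h : ∀ ω, X ω ≤ Y ω + m) : γ X ≤ γ Y + m := by
  have h1 : γ X ≤ γ (Y - const Ω (-m)) := hγ.1 _ _ (fun ω => by simpa using h ω)
  rw [hγ.2.1] at h1; linarith

lemma rm_le_norm {γ : (Ω →ᵇ ℝ) → ℝ} (hγ : IsRiskMeasure γ) (X : Ω →ᵇ ℝ) : γ X ≤ ‖X‖ := by
  have := rm_mono_add hγ X 0 ‖X‖
    (fun ω => by simpa using (abs_le.mp (X.norm_coe_le_norm ω)).2)
  rw [hγ.2.2] at this; linarith

end Aux

theorem supremum_representation_via_relaxations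
    {Ω : Type*} [TopologicalSpace Ω] [DiscreteTopology Ω] [Nonempty Ω]
    {ι : Type*} [Nonempty ι]
    (ρ : ι → (Ω →ᵇ ℝ) → ℝ)
    (hrm : ∀ i, IsRiskMeasure (ρ i)) (hss : ∀ i, IsStarShaped (ρ i))
    (Γ : ι → Set ((Ω →ᵇ ℝ) → ℝ))
    (hΓ : ∀ i, ∀ γ ∈ Γ i, IsRiskMeasure γ ∧ IsConvex γ)
    (hrep : ∀ i, ∀ X : Ω →ᵇ ℝ, IsLeast {y : ℝ | ∃ γ ∈ Γ i, y = γ X} (ρ i X)) :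
    (∀ X : Ω →ᵇ ℝ,
      IsLeast {y : ℝ | ∃ γ ∈ ⋂ i, relaxation (Γ i), y = γ X} (⨆ i, ρ i X)) ∧
    (⋂ i, relaxation (Γ i)) =
      {γ | (IsRiskMeasure γ ∧ IsConvex γ) ∧
        ∀ X : Ω →ᵇ ℝ, (⨆ i, ρ i X) ≤ γ X} := by
  classical
  obtain ⟨i₀⟩ := (inferInstance : Nonempty ι)
  -- membership in the intersection of relaxations
  have hmem : ∀ γ : (Ω →ᵇ ℝ) → ℝ, γ ∈ ⋂ i, relaxation (Γ i) ↔
      (IsRiskMeasure γ ∧ IsConvex γ) ∧ ∀ i, ∀ X, ρ i X ≤ γ X := by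
    intro γ
    simp only [Set.mem_iInter, relaxation, Set.mem_setOf_eq]
    constructor
    · intro h
      refine ⟨(h i₀).1, fun i X => ?_⟩
      obtain ⟨γ', hγ', hle⟩ := (h i).2 X
      exact le_trans ((hrep i X).2 ⟨γ', hγ', rfl⟩) hle
    · rintro ⟨h1, h2⟩ i
      refine ⟨h1, fun X => ?_⟩
      obtain ⟨γ', hγ', heq⟩ := (hrep i X).1
      exact ⟨γ', hγ', heq ▸ h2 i X⟩
  have hbdd : ∀ X : Ω →ᵇ ℝ, BddAbove (Set.range fun i => ρ i X) := by
    intro X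
    exact ⟨‖X‖, by rintro y ⟨i, rfl⟩; exact rm_le_norm (hrm i) X⟩
  -- the set equality
  have hset : (⋂ i, relaxation (Γ i)) =
      {γ | (IsRiskMeasure γ ∧ IsConvex γ) ∧ ∀ X : Ω →ᵇ ℝ, (⨆ i, ρ i X) ≤ γ X} := by
    ext γ
    rw [hmem γ, Set.mem_setOf_eq]
    constructor
    · rintro ⟨h1, h2⟩
      exact ⟨h1, fun X => ciSup_le fun i => h2 i X⟩
    · rintro ⟨h1, h2⟩
      exact ⟨h1, fun i X => le_trans (le_ciSup (hbdd X) i) (h2 X)⟩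
  refine ⟨fun X₀ => ?_, hset⟩
  -- construction of the attaining convex risk measure
  set r : ℝ := ⨆ i, ρ i X₀ with hr
  set Z₀ : Ω →ᵇ ℝ := X₀ - const Ω r with hZ₀
  -- ρ i (l • Z₀) ≤ 0 for l ∈ [0,1]
  have hZ0 : ∀ i, ρ i Z₀ ≤ 0 := by
    intro i
    rw [hZ₀, (hrm i).2.1]
    have := le_ciSup (hbdd X₀) i
    linarith
  have hlZ : ∀ i, ∀ l : ℝ, l ∈ Set.Icc (0:ℝ) 1 → ρ i (l • Z₀) ≤ 0 := by
    rintro i l ⟨hl0, hl1⟩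
    rcases eq_or_lt_of_le hl0 with h0 | h0
    · rw [← h0, zero_smul]; exact le_of_eq (hrm i).2.2
    rcases eq_or_lt_of_le hl1 with h1 | h1
    · rw [h1, one_smul]; exact hZ0 i
    · have hinv : 1 < 1 / l := by rw [lt_div_iff₀ h0]; linarith
      have := hss i (l • Z₀) (1/l) hinv
      rw [smul_smul, one_div_mul_cancel (ne_of_gt h0), one_smul] at this
      have h2 := hZ0 i
      have hpos : 0 < 1 / l := by positivity
      nlinarith
  -- key: ρ i X ≤ bSup (X - l • Z₀)
  have hkey : ∀ i, ∀ X : Ω →ᵇ ℝ, ∀ l : ℝ, l ∈ Set.Icc (0:ℝ) 1 →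
      ρ i X ≤ bSup (X - l • Z₀) := by
    intro i X l hl
    have := rm_mono_add (hrm i) X (l • Z₀) (bSup (X - l • Z₀)) (fun ω => by
      have := le_bSup (X - l • Z₀) ω
      simp only [coe_sub, coe_smul, Pi.sub_apply, Pi.smul_apply, smul_eq_mul] at this ⊢
      linarith)
    have h2 := hlZ i l hl
    linarith
  -- the candidate measure
  set g : (Ω →ᵇ ℝ) → ℝ :=
    fun X => sInf ((fun l => bSup (X - l • Z₀)) '' Set.Icc (0:ℝ) 1) with hg
  have hne : ∀ X : Ω →ᵇ ℝ, ((fun l => bSup (X - l • Z₀)) '' Set.Icc (0:ℝ) 1).Nonempty :=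
    fun X => ⟨_, Set.mem_image_of_mem _ (Set.mem_Icc.mpr ⟨le_refl 0, zero_le_one⟩)⟩
  have hbb : ∀ X : Ω →ᵇ ℝ, BddBelow ((fun l => bSup (X - l • Z₀)) '' Set.Icc (0:ℝ) 1) := by
    intro X
    exact ⟨ρ i₀ X, by rintro y ⟨l, hl, rfl⟩; exact hkey i₀ X l hl⟩
  have hgle : ∀ (X : Ω →ᵇ ℝ) (l : ℝ), l ∈ Set.Icc (0:ℝ) 1 → g X ≤ bSup (X - l • Z₀) :=
    fun X l hl => csInf_le (hbb X) (Set.mem_image_of_mem _ hl)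
  have hleg : ∀ i, ∀ X : Ω →ᵇ ℝ, ρ i X ≤ g X := by
    intro i X
    refine le_csInf (hne X) ?_
    rintro y ⟨l, hl, rfl⟩
    exact hkey i X l hl
  -- g is a risk measure
  have hgmono : ∀ X Y : Ω →ᵇ ℝ, Y ≤ X → g Y ≤ g X := by
    intro X Y hYX
    refine le_csInf (hne X) ?_
    rintro y ⟨l, hl, rfl⟩
    refine le_trans (hgle Y l hl) (bSup_le fun ω => ?_)
    refine le_trans ?_ (le_bSup (X - l • Z₀) ω)
    simp only [coe_sub, coe_smul, Pi.sub_apply, Pi.smul_apply, smul_eq_mul]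
    have h2 : Y ω ≤ X ω := hYX ω
    linarith
  have hSshift : ∀ (X : Ω →ᵇ ℝ) (m l : ℝ),
      bSup ((X - const Ω m) - l • Z₀) = bSup (X - l • Z₀) - m := by
    intro X m l
    have harg : (X - const Ω m) - l • Z₀ = (X - l • Z₀) - const Ω m := by
      ext ω; simp; ring
    rw [harg]
    apply le_antisymm
    · refine bSup_le fun ω => ?_
      have := le_bSup (X - l • Z₀) ω
      simp only [coe_sub, Pi.sub_apply, const_apply] at this ⊢
      linarith
    · rw [sub_le_iff_le_add]
      refine bSup_le fun ω => ?_
      have := le_bSup ((X - l • Z₀) - const Ω m) ω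
      simp only [coe_sub, Pi.sub_apply, const_apply] at this ⊢
      linarith
  have hgtrans : ∀ (X : Ω →ᵇ ℝ) (m : ℝ), g (X - const Ω m) = g X - m := by
    intro X m
    apply le_antisymm
    · rw [le_sub_iff_add_le]
      refine le_csInf (hne X) ?_
      rintro y ⟨l, hl, rfl⟩
      have h1 := hgle (X - const Ω m) l hl
      rw [hSshift X m l] at h1
      linarith
    · refine le_csInf (hne (X - const Ω m)) ?_
      rintro y ⟨l, hl, rfl⟩
      show g X - m ≤ bSup (X - const Ω m - l • Z₀)
      rw [hSshift X m l]
      have := hgle X l hl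
      linarith
  have hg0 : g 0 = 0 := by
    apply le_antisymm
    · have h1 := hgle 0 0 ⟨le_refl 0, zero_le_one⟩
      have h2 : (0 : Ω →ᵇ ℝ) - (0:ℝ) • Z₀ = 0 := by simp
      rw [h2] at h1
      have h3 : bSup (0 : Ω →ᵇ ℝ) = 0 := by
        apply le_antisymm (bSup_le fun ω => by simp)
        simpa using le_bSup (0 : Ω →ᵇ ℝ) (Classical.arbitrary Ω)
      linarith
    · have := hleg i₀ 0
      rw [(hrm i₀).2.2] at this
      exact this
  have hgconv : IsConvex g := by
    intro X Y t ht
    obtain ⟨ht0, ht1⟩ := ht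
    refine le_of_forall_pos_le_add ?_
    intro ε hε
    obtain ⟨aX, ⟨lX, hlX, rfl⟩, haX⟩ := Real.lt_sInf_add_pos (hne X) hε
    obtain ⟨aY, ⟨lY, hlY, rfl⟩, haY⟩ := Real.lt_sInf_add_pos (hne Y) hε
    have hgXeq : sInf ((fun l => bSup (X - l • Z₀)) '' Set.Icc (0:ℝ) 1) = g X := by rw [hg]
    have hgYeq : sInf ((fun l => bSup (Y - l • Z₀)) '' Set.Icc (0:ℝ) 1) = g Y := by rw [hg]
    rw [hgXeq] at haX
    rw [hgYeq] at haY
    obtain ⟨hlX0, hlX1⟩ := hlX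
    obtain ⟨hlY0, hlY1⟩ := hlY
    set l := t * lX + (1 - t) * lY with hldef
    have hlmem : l ∈ Set.Icc (0:ℝ) 1 := by
      constructor
      · have := mul_nonneg ht0 hlX0
        have := mul_nonneg (by linarith : (0:ℝ) ≤ 1 - t) hlY0
        rw [hldef]; linarith
      · rw [hldef]; nlinarith
    have hcomb : bSup (t • X + (1-t) • Y - l • Z₀) ≤
        t * bSup (X - lX • Z₀) + (1-t) * bSup (Y - lY • Z₀) := by
      refine bSup_le fun ω => ?_
      have h1 := le_bSup (X - lX • Z₀) ω
      have h2 := le_bSup (Y - lY • Z₀) ω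
      have h1' := mul_le_mul_of_nonneg_left h1 ht0
      have h2' := mul_le_mul_of_nonneg_left h2 (by linarith : (0:ℝ) ≤ 1 - t)
      simp only [coe_sub, coe_smul, coe_add, Pi.sub_apply, Pi.add_apply,
        Pi.smul_apply, smul_eq_mul] at h1' h2' ⊢
      rw [hldef]
      nlinarith
    have hmain := hgle (t • X + (1-t) • Y) l hlmem
    have e1 : t * bSup (X - lX • Z₀) ≤ t * (g X + ε) :=
      mul_le_mul_of_nonneg_left (le_of_lt haX) ht0
    have e2 : (1-t) * bSup (Y - lY • Z₀) ≤ (1-t) * (g Y + ε) :=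
      mul_le_mul_of_nonneg_left (le_of_lt haY) (by linarith)
    nlinarith
  have hgRM : IsRiskMeasure g := ⟨hgmono, hgtrans, hg0⟩
  have hgmem : g ∈ ⋂ i, relaxation (Γ i) := (hmem g).mpr ⟨⟨hgRM, hgconv⟩, fun i X => hleg i X⟩
  have hgX₀ : g X₀ = r := by
    apply le_antisymm
    · have h1 := hgle X₀ 1 ⟨zero_le_one, le_refl 1⟩
      have h2 : X₀ - (1:ℝ) • Z₀ = const Ω r := by
        ext ω; simp [hZ₀]
      rw [h2] at h1
      have h3 : bSup (const Ω r) = r := by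
        apply le_antisymm (bSup_le fun ω => by simp)
        simpa using le_bSup (const Ω r) (Classical.arbitrary Ω)
      linarith
    · exact ciSup_le fun i => hleg i X₀
  constructor
  · exact ⟨g, hgmem, hgX₀.symm⟩
  · rintro y ⟨γ, hγm, rfl⟩
    exact ciSup_le fun i => ((hmem γ).mp hγm).2 i X₀
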